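/- Let K be a field, A = K[e]/(e^4), and for λ_3 ∈ K let V(0, 1, λ_3) = span{e_0, e_2 + λ_3 e_3}. Then for every θ ∈ K, writing f = e_2 + λ_3 e_3, one has (e_0 + θf)^{-1} V(0, 1, λ_3) = V(0, 1, λ_3); i.e., V(0,1,λ_3) is fixed by multiplication by the inverse of any of its units. Consequently, if γ is any unit of A with γ V(0,1,λ_3) = V(0,1,λ_3') then λ_3 = λ_3'. -/

import Mathlib

open Polynomial in
lemma aux_li (K : Type*) [Field K] :
    LinearIndependent K (fun i : Fin 4 => (AdjoinRoot.root (X ^ 4 : K[X])) ^ (i : ℕ)) := by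
  have h0 : (X ^ 4 : K[X]) ≠ 0 := pow_ne_zero _ X_ne_zero
  have hdim : (AdjoinRoot.powerBasis h0).dim = 4 := by
    rw [AdjoinRoot.powerBasis_dim]; simp
  have li := (AdjoinRoot.powerBasis h0).basis.linearIndependent
  have := li.comp (finCongr hdim.symm) (finCongr hdim.symm).injective
  convert this using 1
  funext i
  simp only [Function.comp_apply, PowerBasis.basis_eq_pow, AdjoinRoot.powerBasis_gen]; rfl
  rfl

open Polynomial in
/-- in `A = K[e]/(e^4)`, with `V(0,1,λ₃) = span{1, e² + λ₃e³}` and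
`f = e² + λ₃e³`, for every `θ ∈ K` the element `1 + θf` is a unit and
`(1 + θf)⁻¹ · V(0,1,λ₃) = V(0,1,λ₃)`; consequently if `γ` is any unit of `A` with
`γ·V(0,1,λ₃) = V(0,1,λ₃')`, then `λ₃ = λ₃'`. -/
theorem stmt_17 (K : Type*) [Field K]
    (e : AdjoinRoot (X ^ 4 : K[X])) (he : e = AdjoinRoot.root (X ^ 4 : K[X]))
    (Vs : K → Submodule K (AdjoinRoot (X ^ 4 : K[X])))
    (hVs : ∀ lam₃ : K, Vs lam₃ = Submodule.span K {1, e ^ 2 + lam₃ • e ^ 3}) :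
    (∀ lam₃ θ : K,
      ∃ u : (AdjoinRoot (X ^ 4 : K[X]))ˣ,
        (u : AdjoinRoot (X ^ 4 : K[X])) = 1 + θ • (e ^ 2 + lam₃ • e ^ 3) ∧
        Submodule.map (LinearMap.mulLeft K ((u⁻¹ : _ˣ) : AdjoinRoot (X ^ 4 : K[X])))
          (Vs lam₃) = Vs lam₃) ∧
    (∀ lam₃ lam₃' : K, ∀ γ : (AdjoinRoot (X ^ 4 : K[X]))ˣ,
      Submodule.map (LinearMap.mulLeft K (γ : AdjoinRoot (X ^ 4 : K[X]))) (Vs lam₃) =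
        Vs lam₃' → lam₃ = lam₃') := by
  have he4 : e ^ 4 = 0 := by
    rw [he, ← AdjoinRoot.mk_X, ← map_pow, AdjoinRoot.mk_self]
  have hff : ∀ l l' : K,
      (e ^ 2 + l • e ^ 3) * (e ^ 2 + l' • e ^ 3) = (0 : AdjoinRoot (X ^ 4 : K[X])) := by
    intro l l'
    simp only [Algebra.smul_def]
    set c := algebraMap K (AdjoinRoot (X ^ 4 : K[X])) l
    set c' := algebraMap K (AdjoinRoot (X ^ 4 : K[X])) l'
    linear_combination (1 + (c + c') * e + c * c' * e ^ 2) * he4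
  constructor
  · intro lam₃ θ
    have hxx : (θ • (e ^ 2 + lam₃ • e ^ 3)) * (θ • (e ^ 2 + lam₃ • e ^ 3))
        = (0 : AdjoinRoot (X ^ 4 : K[X])) := by
      rw [smul_mul_smul_comm, hff lam₃ lam₃, smul_zero]
    have hmul : (1 + θ • (e ^ 2 + lam₃ • e ^ 3)) * (1 - θ • (e ^ 2 + lam₃ • e ^ 3)) = 1 := by
      rw [add_mul, one_mul, mul_sub, mul_one, hxx, sub_zero, sub_add_cancel]
    refine ⟨⟨1 + θ • (e ^ 2 + lam₃ • e ^ 3), 1 - θ • (e ^ 2 + lam₃ • e ^ 3), hmul,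
      by rw [mul_comm] at hmul; exact hmul⟩, rfl, ?_⟩
    have hucoe : ((⟨1 + θ • (e ^ 2 + lam₃ • e ^ 3), 1 - θ • (e ^ 2 + lam₃ • e ^ 3), hmul,
        by rw [mul_comm] at hmul; exact hmul⟩⁻¹ : (AdjoinRoot (X ^ 4 : K[X]))ˣ)
        : AdjoinRoot (X ^ 4 : K[X])) = 1 - θ • (e ^ 2 + lam₃ • e ^ 3) := rfl
    rw [hucoe, hVs, Submodule.map_span]
    have hinvf : (1 - θ • (e ^ 2 + lam₃ • e ^ 3)) * (e ^ 2 + lam₃ • e ^ 3)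
        = e ^ 2 + lam₃ • e ^ 3 := by
      rw [sub_mul, one_mul, smul_mul_assoc, hff lam₃ lam₃, smul_zero, sub_zero]
    have himg : (⇑(LinearMap.mulLeft K (1 - θ • (e ^ 2 + lam₃ • e ^ 3))) ''
        {1, e ^ 2 + lam₃ • e ^ 3})
        = {1 - θ • (e ^ 2 + lam₃ • e ^ 3), e ^ 2 + lam₃ • e ^ 3} := by
      rw [Set.image_pair]
      simp only [LinearMap.mulLeft_apply, mul_one, hinvf]
    rw [himg]
    apply le_antisymm
    · rw [Submodule.span_le]
      rintro x (rfl | rfl)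
      · exact Submodule.mem_span_pair.mpr ⟨1, -θ, by module⟩
      · exact Submodule.subset_span (by right; rfl)
    · rw [Submodule.span_le]
      rintro x (rfl | rfl)
      · exact Submodule.mem_span_pair.mpr ⟨1, θ, by module⟩
      · exact Submodule.subset_span (by right; rfl)
  · intro lam₃ lam₃' γ h
    have hnt : Nontrivial (AdjoinRoot (X ^ 4 : K[X])) :=
      AdjoinRoot.nontrivial _ (by rw [degree_pow, degree_X]; norm_num)
    rw [hVs lam₃, hVs lam₃'] at h
    have h1 : (1 : AdjoinRoot (X ^ 4 : K[X])) ∈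
        Submodule.span K {1, e ^ 2 + lam₃ • e ^ 3} :=
      Submodule.subset_span (by left; rfl)
    have hfmem : (e ^ 2 + lam₃ • e ^ 3) ∈
        Submodule.span K {1, e ^ 2 + lam₃ • e ^ 3} :=
      Submodule.subset_span (by right; rfl)
    have hγ : (γ : AdjoinRoot (X ^ 4 : K[X])) ∈
        Submodule.span K {1, e ^ 2 + lam₃' • e ^ 3} := by
      rw [← h]
      exact ⟨1, h1, by simp⟩
    have hγf : (γ : AdjoinRoot (X ^ 4 : K[X])) * (e ^ 2 + lam₃ • e ^ 3) ∈
        Submodule.span K {1, e ^ 2 + lam₃' • e ^ 3} := by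
      rw [← h]
      exact ⟨_, hfmem, rfl⟩
    obtain ⟨a, b, hab⟩ := Submodule.mem_span_pair.mp hγ
    have hgf : (γ : AdjoinRoot (X ^ 4 : K[X])) * (e ^ 2 + lam₃ • e ^ 3)
        = a • (e ^ 2 + lam₃ • e ^ 3) := by
      rw [← hab, add_mul, smul_mul_assoc, smul_mul_assoc, one_mul, hff lam₃' lam₃,
        smul_zero, add_zero]
    rw [hgf] at hγf
    obtain ⟨c, d, hcd⟩ := Submodule.mem_span_pair.mp hγf
    -- expand in the power basis
    have li := aux_li K
    rw [← he] at li
    have key := Fintype.linearIndependent_iff.mp li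
      ![c, 0, d - a, d * lam₃' - a * lam₃] (by
        rw [Fin.sum_univ_four]
        show c • e ^ (0:ℕ) + (0:K) • e ^ (1:ℕ) + (d - a) • e ^ (2:ℕ)
          + (d * lam₃' - a * lam₃) • e ^ (3:ℕ) = 0
        have := hcd
        simp only [pow_zero, pow_one]
        linear_combination (norm := module) hcd)
    have h2 : d - a = 0 := by simpa using key 2
    have h3 : d * lam₃' - a * lam₃ = 0 := by simpa using key 3
    -- a ≠ 0
    have ha : a ≠ 0 := by
      intro ha0
      rw [ha0, zero_smul, zero_add] at hab
      have hsq : (γ : AdjoinRoot (X ^ 4 : K[X])) * (γ : AdjoinRoot (X ^ 4 : K[X])) = 0 := by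
        rw [← hab, smul_mul_assoc, mul_smul_comm, hff lam₃' lam₃', smul_zero, smul_zero]
      have : (1 : AdjoinRoot (X ^ 4 : K[X])) = 0 := by
        calc (1 : AdjoinRoot (X ^ 4 : K[X]))
            = (γ * γ : (AdjoinRoot (X ^ 4 : K[X]))ˣ) * ((γ * γ : _ˣ)⁻¹ : _ˣ) := by
              rw [Units.mul_inv]
          _ = 0 := by rw [Units.val_mul, hsq, zero_mul]
      exact one_ne_zero this
    have hd : d = a := sub_eq_zero.mp h2
    rw [hd] at h3
    exact (mul_left_cancel₀ ha (sub_eq_zero.mp h3)).symm
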